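/- Suppose H is a horoball of the Groves–Manning space X, x,y ∈ H(k), and ψ = (α₁, τ₁, α₂, τ₂, …, αₙ, τₙ, α_{n+1}) is a path in H^k between x and y, where each αᵢ is a nontrivial vertical segment and each τᵢ is a nontrivial horizontal segment. If γ is a projection of ψ into H(k), then for every vertex of γ, the vertical line at that vertex passes within 1 horizontal unit of a vertex of one of the τᵢ. -/

import Mathlib

/-! Core definitions: Cayley graphs, combinatorial horoballs, and the
Groves–Manning space of a relatively hyperbolic pair, as a locally finite graph. -/

open SimpleGraph

namespace GM

variable {G : Type} [Group G] {ι : Type}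

/-- Adjacency in the Cayley graph of `G` with respect to the symmetrized set `S`. -/
def cayleyAdj (S : Set G) (a b : G) : Prop :=
  a ≠ b ∧ (a⁻¹ * b ∈ S ∨ b⁻¹ * a ∈ S)

/-- The Cayley graph of `G` with respect to `S`. -/
def cayleyGraph (S : Set G) : SimpleGraph G where
  Adj := cayleyAdj S
  symm := by constructor; rintro a b ⟨h1, h2⟩; exact ⟨h1.symm, h2.symm⟩
  loopless := ⟨fun a h => h.1 rfl⟩

/-- The full subgraph of the Cayley graph on the left cosets of `P i`
(the union over all cosets; distinct cosets lie in distinct components). -/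
def cosetGraph (S : Set G) (P : ι → Subgroup G) (i : ι) : SimpleGraph G where
  Adj a b := cayleyAdj S a b ∧ a⁻¹ * b ∈ P i
  symm := by
    constructor
    rintro a b ⟨⟨h0, h1⟩, h2⟩
    refine ⟨⟨h0.symm, h1.symm⟩, ?_⟩
    have := (P i).inv_mem h2
    simpa [mul_inv_rev] using this
  loopless := ⟨fun a h => h.1.1 rfl⟩

/-- Vertices of the Groves–Manning space: the group `G` (depth 0), together with,
for each `i : ι` and `g : G`, a vertex `(g, k)` at depth `k ≥ 1` in the combinatorial
horoball over the coset `g • (P i)`. -/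
def GMVert (G ι : Type) : Type := G ⊕ (ι × G × ℕ+)

/-- The depth function `𝒟` on vertices. -/
def depth : GMVert G ι → ℕ
  | .inl _ => 0
  | .inr (_, _, k) => (k : ℕ)

/-- The underlying group element ("base") of a vertex. -/
def baseElt : GMVert G ι → G
  | .inl g => g
  | .inr (_, g, _) => g

/-- The vertex over `g` at depth `l` in the horoballs for the subgroup `P i`. -/
def atLevel (i : ι) (g : G) : ℕ → GMVert G ι
  | 0 => .inl g
  | (l + 1) => .inr (i, g, ⟨l + 1, Nat.succ_pos l⟩)

/-- Horizontal adjacency at depth `k ≥ 1` inside a horoball: two distinct elements of a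
common left coset of `P i` whose distance in the coset graph is at most `2 ^ k`. -/
def horizAdjPos (S : Set G) (P : ι → Subgroup G) (i : ι) (k : ℕ) (a b : G) : Prop :=
  a ≠ b ∧ a⁻¹ * b ∈ P i ∧ (cosetGraph S P i).Reachable a b ∧ (cosetGraph S P i).dist a b ≤ 2 ^ k

/-- Horizontal adjacency at depth `l` (at depth `0` this is an edge of the coset graph). -/
def hAdjL (S : Set G) (P : ι → Subgroup G) (i : ι) (l : ℕ) (a b : G) : Prop :=
  match l with
  | 0 => (cosetGraph S P i).Adj a b
  | (m + 1) => horizAdjPos S P i (m + 1) a b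

/-- Adjacency in the Groves–Manning space: Cayley edges at depth 0, vertical edges
joining `(g, k)` to `(g, k+1)`, and horizontal horoball edges. -/
def gmAdj (S : Set G) (P : ι → Subgroup G) : GMVert G ι → GMVert G ι → Prop
  | .inl a, .inl b => cayleyAdj S a b
  | .inl a, .inr (_, b, k) => a = b ∧ (k : ℕ) = 1
  | .inr (_, a, k), .inl b => a = b ∧ (k : ℕ) = 1
  | .inr (i, a, k), .inr (j, b, l) =>
      i = j ∧ ((a = b ∧ ((l : ℕ) = (k : ℕ) + 1 ∨ (k : ℕ) = (l : ℕ) + 1)) ∨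
        ((k : ℕ) = (l : ℕ) ∧ horizAdjPos S P i (k : ℕ) a b))

/-- The (1-skeleton of the) Groves–Manning space of `(G, {P i}, S)`. -/
def GMGraph (S : Set G) (P : ι → Subgroup G) : SimpleGraph (GMVert G ι) where
  Adj := gmAdj S P
  symm := by
    constructor
    rintro (a | ⟨i, a, k⟩) (b | ⟨j, b, l⟩) h
    · exact ⟨h.1.symm, h.2.symm⟩
    · exact ⟨h.1.symm, h.2⟩
    · exact ⟨h.1.symm, h.2⟩
    · obtain ⟨rfl, (⟨rfl, hv⟩ | ⟨hk, hh⟩)⟩ := h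
      · exact ⟨rfl, Or.inl ⟨rfl, hv.symm⟩⟩
      · refine ⟨rfl, Or.inr ⟨hk.symm, hh.1.symm, ?_, hh.2.2.1.symm, ?_⟩⟩
        · have := (P i).inv_mem hh.2.1; simpa [mul_inv_rev] using this
        · rw [SimpleGraph.dist_comm, ← hk]; exact hh.2.2.2
  loopless := by
    constructor
    rintro (a | ⟨i, a, k⟩) h
    · exact h.1 rfl
    · obtain ⟨-, (⟨-, hv⟩ | ⟨-, hh⟩)⟩ := h
      · omega
      · exact hh.1 rfl

variable (S : Set G) (P : ι → Subgroup G)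

/-- The identity vertex `*` of the Groves–Manning space. -/
def idv : GMVert G ι := Sum.inl 1

/-- The ball `B_r(c)` of radius `r` about `c`, in the edge-path metric of the
Groves–Manning space. -/
def gball (c : GMVert G ι) (r : ℕ) : Set (GMVert G ι) :=
  {v | (GMGraph S P).dist c v ≤ r}

/-- The horoball over the coset `t • (P i)`. -/
def horoball (i : ι) (t : G) : Set (GMVert G ι) :=
  fun v => match v with
  | .inl g => t⁻¹ * g ∈ P i
  | .inr (j, g, _) => j = i ∧ t⁻¹ * g ∈ P i

/-- `H(m)`: the vertices of the horoball at depth exactly `m`. -/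
def horoSphere (i : ι) (t : G) (m : ℕ) : Set (GMVert G ι) :=
  {v | v ∈ horoball P i t ∧ depth v = m}

/-- `H^m`: the `m`-horoball, all vertices of the horoball at depth at least `m`. -/
def horoDeep (i : ι) (t : G) (m : ℕ) : Set (GMVert G ι) :=
  {v | v ∈ horoball P i t ∧ m ≤ depth v}

/-- A walk is geodesic if its length realizes the graph distance of its endpoints. -/
def IsGeodesic {V : Type} (Γ : SimpleGraph V) {a b : V} (p : Γ.Walk a b) : Prop :=
  p.length = Γ.dist a b

/-- `Γ` is `δ`-hyperbolic: all geodesic triangles are `δ`-slim. -/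
def SlimTriangles {V : Type} (Γ : SimpleGraph V) (δ : ℕ) : Prop :=
  ∀ ⦃a b c : V⦄ (p : Γ.Walk a b) (q : Γ.Walk b c) (r : Γ.Walk a c),
    IsGeodesic Γ p → IsGeodesic Γ q → IsGeodesic Γ r →
    ∀ v ∈ r.support,
      (∃ w ∈ p.support, Γ.dist v w ≤ δ) ∨ (∃ w ∈ q.support, Γ.dist v w ≤ δ)

end GM

namespace GM

variable {G : Type} [Group G] {ι : Type}

/-- The graph `H(m)`: the full subgraph of the Groves–Manning space on the vertices of
depth exactly `m` in the horoball over `t • (P i)` (its edges are the horizontal edges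
at depth `m`). -/
def levelGraph (S : Set G) (P : ι → Subgroup G) (i : ι) (t : G) (m : ℕ) :
    SimpleGraph (GMVert G ι) where
  Adj v w := (GMGraph S P).Adj v w ∧ v ∈ horoball P i t ∧ w ∈ horoball P i t ∧
    depth v = m ∧ depth w = m
  symm := by constructor; rintro v w ⟨h1, h2, h3, h4, h5⟩; exact ⟨h1.symm, h3, h2, h5, h4⟩
  loopless := ⟨fun v h => (GMGraph S P).irrefl h.1⟩

/-- `d^m(z,·)`-ball: `B̂_n(z)` is the set of vertices `v` of `H(m)` with `d^m(v,z) ≤ n`,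
where `d^m` is the edge-path distance in the graph `H(m)`. -/
def hatB (S : Set G) (P : ι → Subgroup G) (i : ι) (t : G) (m : ℕ)
    (z : GMVert G ι) (n : ℕ) : Set (GMVert G ι) :=
  {v | v ∈ horoSphere P i t m ∧ (levelGraph S P i t m).Reachable z v ∧
    (levelGraph S P i t m).dist z v ≤ n}

end GM

namespace GM

variable {G : Type} [Group G] {ι : Type}

/-- The list of "dropped" vertices of a walk `ψ`: its starting vertex, followed by the
vertical drops to depth `k` (in the horoballs of `P i`) of the terminal vertices of the
horizontal darts of `ψ`, in order. -/
def dropList (i : ι) (k : ℕ) {S : Set G} {P : ι → Subgroup G} {x y : GMVert G ι}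
    (ψ : (GMGraph S P).Walk x y) : List (GMVert G ι) :=
  x :: ((ψ.darts.filter (fun d => depth d.toProd.1 == depth d.toProd.2)).map
    (fun d => atLevel i (baseElt d.toProd.2) k))

/-- `ChainWalk Γ l w` says that the walk `w` is a concatenation of geodesic
(shortest) walks in `Γ` joining the consecutive vertices of the list `l`. -/
inductive ChainWalk {V : Type} (Γ : SimpleGraph V) : List V → ∀ {a b : V}, Γ.Walk a b → Prop
  | single {a : V} : ChainWalk Γ [a] (SimpleGraph.Walk.nil : Γ.Walk a a)
  | step {a b c : V} (σ : Γ.Walk a b) {rest : Γ.Walk b c} (l : List V)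
      (hσ : σ.length = Γ.dist a b) (h : ChainWalk Γ (b :: l) rest) :
      ChainWalk Γ (a :: b :: l) (σ.append rest)

/-- `γ` is a projection of `ψ` into `H(k)`: it is obtained by dropping each vertex of
each horizontal segment of `ψ` vertically down to `H(k)` and joining the consecutive
resulting vertices by shortest edge paths in the graph `H(k)`. -/
def IsProjection (S : Set G) (P : ι → Subgroup G) (i : ι) (t : G) (k : ℕ)
    {x y x' y' : GMVert G ι} (ψ : (GMGraph S P).Walk x y)
    (γ : (levelGraph S P i t k).Walk x' y') : Prop :=
  ChainWalk (levelGraph S P i t k) (dropList i k ψ) γ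

end GM

namespace GM

variable {G : Type} [Group G] {ι : Type}

lemma baseElt_atLevel (i : ι) (c : G) (k : ℕ) :
    baseElt (atLevel i c k : GMVert G ι) = c := by cases k <;> rfl

lemma depth_atLevel (i : ι) (c : G) (k : ℕ) :
    depth (atLevel i c k : GMVert G ι) = k := by cases k <;> rfl

lemma atLevel_canonical {P : ι → Subgroup G} {i : ι} {g : G} {v : GMVert G ι}
    (hv : v ∈ horoball P i g) : atLevel i (baseElt v) (depth v) = v := by
  rcases v with a | ⟨j, a, m⟩
  · rfl
  · obtain ⟨rfl, -⟩ := hv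
    obtain ⟨m, hm⟩ := m
    cases m with
    | zero => exact absurd hm (lt_irrefl 0)
    | succ s => rfl

lemma cosetWalk_mem {S : Set G} {P : ι → Subgroup G} {i : ι} {a b : G}
    (w : (cosetGraph S P i).Walk a b) : a⁻¹ * b ∈ P i := by
  induction w with
  | nil => simpa using (P i).one_mem
  | @cons a b c h w ih =>
      have := mul_mem (show _ ∧ _ from h).2 ih
      simpa [mul_assoc] using this

lemma base_eq_of_vert {S : Set G} {P : ι → Subgroup G} {v w : GMVert G ι}
    (h : (GMGraph S P).Adj v w) (hd : depth v ≠ depth w) : baseElt v = baseElt w := by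
  rcases v with a | ⟨j, a, m⟩ <;> rcases w with b | ⟨j', b, m'⟩
  · exact absurd rfl hd
  · exact h.1
  · exact h.1
  · rcases h with ⟨rfl, ⟨rfl, -⟩ | ⟨hk, -⟩⟩
    · rfl
    · exact absurd hk hd

end GM

namespace GM

set_option linter.unusedSectionVars false

variable {G : Type} [Group G] {ι : Type}

lemma adj_of_walk_length_le_one {V : Type} {Γ : SimpleGraph V} {a b : V}
    (w : Γ.Walk a b) (h1 : w.length ≤ 1) (hne : a ≠ b) : Γ.Adj a b := by
  cases w with
  | nil => exact absurd rfl hne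
  | cons h w' =>
    have h0 : w'.length = 0 := by
      simp only [SimpleGraph.Walk.length_cons] at h1; omega
    exact (SimpleGraph.Walk.eq_of_length_eq_zero h0) ▸ h

/-- A horizontal dart of the GM graph inside the horoball gives a short walk in the
coset graph between the base elements. -/
lemma horizDart_walk {S : Set G} {P : ι → Subgroup G} {i : ι} {g : G} {v w : GMVert G ι}
    (h : (GMGraph S P).Adj v w) (hv : v ∈ horoball P i g) (hw : w ∈ horoball P i g)
    (hd : depth v = depth w) :
    ∃ u : (cosetGraph S P i).Walk (baseElt v) (baseElt w), u.length ≤ 2 ^ depth v := by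
  rcases v with a | ⟨j, a, m⟩ <;> rcases w with b | ⟨j', b, m'⟩
  · have hm : a⁻¹ * b ∈ P i := by
      have := mul_mem ((P i).inv_mem hv) hw
      simpa [mul_assoc] using this
    exact ⟨SimpleGraph.Walk.cons (show _ ∧ _ from ⟨h, hm⟩) SimpleGraph.Walk.nil, by
      exact Nat.one_le_two_pow⟩
  · exfalso; simp only [depth] at hd; have := m'.pos; omega
  · exfalso; simp only [depth] at hd; have := m.pos; omega
  · obtain ⟨rfl, -⟩ := hv
    obtain ⟨rfl, -⟩ := hw
    rcases h with ⟨-, ⟨rfl, hvert⟩ | ⟨-, hne, -, hreach, hdist⟩⟩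
    · exfalso; have hd' : (m : ℕ) = (m' : ℕ) := hd; omega
    · obtain ⟨u, hu⟩ := hreach.exists_walk_length_eq_dist
      exact ⟨u, hu ▸ hdist⟩

/-- A short coset-graph walk between distinct in-coset elements gives a horizontal
edge of the level graph at depth `k`. -/
lemma level_adj {S : Set G} {P : ι → Subgroup G} {i : ι} {g : G} {k : ℕ} {c c' : G}
    (u : (cosetGraph S P i).Walk c c') (hu : u.length ≤ 2 ^ k)
    (hc : g⁻¹ * c ∈ P i) (hne : c ≠ c') :
    (levelGraph S P i g k).Adj (atLevel i c k) (atLevel i c' k) := by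
  have hcc' : c⁻¹ * c' ∈ P i := cosetWalk_mem u
  have hc' : g⁻¹ * c' ∈ P i := by
    have := mul_mem hc hcc'; simpa [mul_assoc] using this
  have hreach : (cosetGraph S P i).Reachable c c' := ⟨u⟩
  have hdist : (cosetGraph S P i).dist c c' ≤ 2 ^ k :=
    le_trans (SimpleGraph.dist_le u) hu
  cases k with
  | zero =>
    have hadj : (cosetGraph S P i).Adj c c' := adj_of_walk_length_le_one u (by simpa using hu) hne
    show _ ∧ _ ∧ _ ∧ _ ∧ _
    exact ⟨(show _ ∧ _ from hadj).1, hc, hc', rfl, rfl⟩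
  | succ s =>
    show _ ∧ _ ∧ _ ∧ _ ∧ _
    exact ⟨show _ ∧ _ from ⟨rfl, Or.inr ⟨rfl, hne, hcc', hreach, hdist⟩⟩, ⟨rfl, hc⟩, ⟨rfl, hc'⟩, rfl, rfl⟩

lemma walk_peel {V : Type} {Γ : SimpleGraph V} (t : ℕ) :
    ∀ {a b : V} (w : Γ.Walk a b), ∃ (c : V) (w₁ : Γ.Walk a c) (w₂ : Γ.Walk c b),
      w₁.length + w₂.length = w.length ∧ w₁.length = min t w.length := by
  induction t with
  | zero =>
    intro a b w
    exact ⟨a, SimpleGraph.Walk.nil, w, by simp, by simp⟩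
  | succ n ih =>
    intro a b w
    cases w with
    | nil => exact ⟨a, SimpleGraph.Walk.nil, SimpleGraph.Walk.nil, by simp, by simp⟩
    | @cons a a' b h w' =>
      obtain ⟨c, w₁, w₂, hsum, hlen⟩ := ih w'
      refine ⟨c, SimpleGraph.Walk.cons h w₁, w₂, ?_, ?_⟩
      · simp only [SimpleGraph.Walk.length_cons]; omega
      · simp only [SimpleGraph.Walk.length_cons]; omega

lemma levelWalk_of_cosetWalk {S : Set G} {P : ι → Subgroup G} {i : ι} {g : G} (k : ℕ) :
    ∀ (m : ℕ) {c c' : G} (u : (cosetGraph S P i).Walk c c'), u.length ≤ m * 2 ^ k →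
      g⁻¹ * c ∈ P i →
      ∃ W : (levelGraph S P i g k).Walk (atLevel i c k) (atLevel i c' k), W.length ≤ m := by
  intro m
  induction m with
  | zero =>
    intro c c' u hu hc
    have h0 : u.length = 0 := by omega
    obtain rfl := SimpleGraph.Walk.eq_of_length_eq_zero h0
    exact ⟨SimpleGraph.Walk.nil, by simp⟩
  | succ n ih =>
    intro c c' u hu hc
    by_cases hcc : c = c'
    · subst hcc; exact ⟨SimpleGraph.Walk.nil, by simp⟩
    by_cases hshort : u.length ≤ 2 ^ k
    · exact ⟨SimpleGraph.Walk.cons (level_adj u hshort hc hcc) SimpleGraph.Walk.nil, by simp⟩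
    · obtain ⟨e, u₁, u₂, hsum, hlen⟩ := walk_peel (2 ^ k) u
      have h1 : u₁.length = 2 ^ k := by omega
      have he : g⁻¹ * e ∈ P i := by
        have := mul_mem hc (cosetWalk_mem u₁); simpa [mul_assoc] using this
      have h2 : u₂.length ≤ n * 2 ^ k := by
        have hmul : (n + 1) * 2 ^ k = n * 2 ^ k + 2 ^ k := by ring
        omega
      obtain ⟨W, hW⟩ := ih u₂ h2 he
      by_cases hce : c = e
      · subst hce; exact ⟨W, by omega⟩
      · refine ⟨SimpleGraph.Walk.cons (level_adj u₁ (le_of_eq h1) hc hce) W, ?_⟩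
        simp only [SimpleGraph.Walk.length_cons]; omega

lemma levelAdj_walk {S : Set G} {P : ι → Subgroup G} {i : ι} {g : G} {k : ℕ}
    {v w : GMVert G ι} (h : (levelGraph S P i g k).Adj v w) :
    ∃ u : (cosetGraph S P i).Walk (baseElt v) (baseElt w), u.length ≤ 2 ^ k := by
  obtain ⟨hadj, hv, hw, hdv, hdw⟩ := (show _ ∧ _ ∧ _ ∧ _ ∧ _ from h)
  have := horizDart_walk hadj hv hw (hdv.trans hdw.symm)
  rwa [hdv] at this

lemma levelWalk_base {S : Set G} {P : ι → Subgroup G} {i : ι} {g : G} {k : ℕ}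
    {v w : GMVert G ι} (W : (levelGraph S P i g k).Walk v w) :
    ∃ u : (cosetGraph S P i).Walk (baseElt v) (baseElt w), u.length ≤ W.length * 2 ^ k := by
  induction W with
  | nil => exact ⟨SimpleGraph.Walk.nil, by simp⟩
  | @cons a b c h W' ih =>
    obtain ⟨u₁, hu₁⟩ := levelAdj_walk h
    obtain ⟨u₂, hu₂⟩ := ih
    refine ⟨u₁.append u₂, ?_⟩
    rw [SimpleGraph.Walk.length_append, SimpleGraph.Walk.length_cons]
    have hmul : (W'.length + 1) * 2 ^ k = W'.length * 2 ^ k + 2 ^ k := by ring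
    omega

lemma close_or_adj {S : Set G} {P : ι → Subgroup G} {i : ι} {g : G} {e : GMVert G ι}
    {c : G} (l : ℕ) (hl : depth e = l) (he : e ∈ horoball P i g)
    (u : (cosetGraph S P i).Walk c (baseElt e)) (hu : u.length ≤ 2 ^ l) :
    atLevel i c l = e ∨ (GMGraph S P).Adj (atLevel i c l) e := by
  have hkey : atLevel i (baseElt e) l = e := hl ▸ atLevel_canonical he
  by_cases hce : c = baseElt e
  · left; rw [hce]; exact hkey
  · right
    rw [← hkey]
    cases l with
    | zero =>
      have hadj : (cosetGraph S P i).Adj c (baseElt e) :=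
        adj_of_walk_length_le_one u (by simpa using hu) hce
      exact (show _ ∧ _ from hadj).1
    | succ s =>
      exact show _ ∧ _ from ⟨rfl, Or.inr ⟨rfl, hce, cosetWalk_mem u, ⟨u⟩,
        le_trans (SimpleGraph.dist_le u) hu⟩⟩

end GM

namespace GM

set_option linter.unusedSectionVars false

variable {G : Type} [Group G] {ι : Type}

lemma horoball_base {P : ι → Subgroup G} {i : ι} {g : G} {v : GMVert G ι}
    (hv : v ∈ horoball P i g) : g⁻¹ * baseElt v ∈ P i := by
  rcases v with a | ⟨j, a, m⟩
  · exact hv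
  · exact hv.2

lemma segment_lemma {S : Set G} {P : ι → Subgroup G} {i : ι} {g : G} {k : ℕ}
    {d : (GMGraph S P).Dart}
    (h1 : d.toProd.1 ∈ horoDeep P i g k) (h2 : d.toProd.2 ∈ horoDeep P i g k)
    (hdep : depth d.toProd.1 = depth d.toProd.2)
    (σ : (levelGraph S P i g k).Walk (atLevel i (baseElt d.toProd.1) k)
      (atLevel i (baseElt d.toProd.2) k))
    (hσ : σ.length = (levelGraph S P i g k).dist (atLevel i (baseElt d.toProd.1) k)
      (atLevel i (baseElt d.toProd.2) k)) :
    ∀ p ∈ σ.support, ∃ v ∈ [d.toProd.1, d.toProd.2],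
      atLevel i (baseElt p) (depth v) = v ∨
        (GMGraph S P).Adj (atLevel i (baseElt p) (depth v)) v := by
  obtain ⟨hb1, hk1⟩ := h1
  obtain ⟨hb2, hk2⟩ := h2
  obtain ⟨u, hu⟩ := horizDart_walk d.adj hb1 hb2 hdep
  have h2l : 2 ^ (depth d.toProd.1 - k) * 2 ^ k = 2 ^ depth d.toProd.1 := by
    rw [← pow_add]; congr 1; omega
  obtain ⟨W, hW⟩ := levelWalk_of_cosetWalk k (2 ^ (depth d.toProd.1 - k)) u
    (by omega) (horoball_base hb1)
  have hlen : σ.length ≤ 2 ^ (depth d.toProd.1 - k) :=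
    hσ ▸ le_trans (SimpleGraph.dist_le W) hW
  intro p hp
  obtain ⟨σ₁, σ₂, rfl⟩ := SimpleGraph.Walk.mem_support_iff_exists_append.mp hp
  have hsum : σ₁.length + σ₂.length = (σ₁.append σ₂).length :=
    (SimpleGraph.Walk.length_append _ _).symm
  obtain ⟨u₁, hu₁⟩ := levelWalk_base σ₁
  obtain ⟨u₂, hu₂⟩ := levelWalk_base σ₂
  have hu₁' : (u₁.copy (baseElt_atLevel i (baseElt d.toProd.1) k) rfl).length
      = u₁.length := SimpleGraph.Walk.length_copy _ _ _
  have hu₂' : (u₂.copy rfl (baseElt_atLevel i (baseElt d.toProd.2) k)).length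
      = u₂.length := SimpleGraph.Walk.length_copy _ _ _
  rcases le_or_gt (2 * σ₁.length) (σ₁.append σ₂).length with hc | hc
  · -- close to the first endpoint
    have hA : σ₁.length * 2 ^ k ≤ 2 ^ depth d.toProd.1 := by
      calc σ₁.length * 2 ^ k ≤ (2 * σ₁.length) * 2 ^ k :=
            Nat.mul_le_mul_right _ (Nat.le_mul_of_pos_left _ (by norm_num))
        _ ≤ 2 ^ (depth d.toProd.1 - k) * 2 ^ k :=
            Nat.mul_le_mul_right _ (le_trans hc hlen)
        _ = 2 ^ depth d.toProd.1 := h2l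
    refine ⟨d.toProd.1, by simp, ?_⟩
    refine close_or_adj (depth d.toProd.1) rfl hb1
      (u₁.copy (baseElt_atLevel i (baseElt d.toProd.1) k) rfl).reverse ?_
    rw [SimpleGraph.Walk.length_reverse, hu₁']
    exact le_trans hu₁ hA
  · -- close to the second endpoint
    have hσ2 : 2 * σ₂.length ≤ (σ₁.append σ₂).length := by omega
    have hA : σ₂.length * 2 ^ k ≤ 2 ^ depth d.toProd.1 := by
      calc σ₂.length * 2 ^ k ≤ (2 * σ₂.length) * 2 ^ k :=
            Nat.mul_le_mul_right _ (Nat.le_mul_of_pos_left _ (by norm_num))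
        _ ≤ 2 ^ (depth d.toProd.1 - k) * 2 ^ k :=
            Nat.mul_le_mul_right _ (le_trans hσ2 hlen)
        _ = 2 ^ depth d.toProd.1 := h2l
    refine ⟨d.toProd.2, by simp, ?_⟩
    rw [← hdep]
    refine close_or_adj (depth d.toProd.1) hdep.symm hb2
      (u₂.copy rfl (baseElt_atLevel i (baseElt d.toProd.2) k)) ?_
    rw [hu₂']
    exact le_trans hu₂ hA

lemma chain_structure {S : Set G} {P : ι → Subgroup G}
    {x y : GMVert G ι} (ψ : (GMGraph S P).Walk x y) :
    List.Chain' (fun a b => ∃ d ∈ ψ.darts, depth d.toProd.1 = depth d.toProd.2 ∧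
        baseElt d.toProd.1 = a ∧ baseElt d.toProd.2 = b)
      (baseElt x :: (ψ.darts.filter (fun d => depth d.toProd.1 == depth d.toProd.2)).map
        (fun d => baseElt d.toProd.2)) := by
  induction ψ with
  | nil => exact List.isChain_singleton _
  | @cons x z y h ψ' ih =>
    rw [SimpleGraph.Walk.darts_cons, List.filter_cons]
    by_cases hdep : depth (G := G) (ι := ι) x = depth z
    · rw [if_pos (by simpa using hdep)]
      rw [List.map_cons]
      refine List.isChain_cons_cons.mpr ⟨⟨⟨(x, z), h⟩, List.mem_cons_self, hdep, rfl, rfl⟩, ?_⟩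
      exact ih.imp (fun a b ⟨d, hd, h3⟩ => ⟨d, List.mem_cons_of_mem _ hd, h3⟩)
    · rw [if_neg (by simpa using hdep)]
      have hbase : baseElt x = baseElt z := base_eq_of_vert h hdep
      rw [hbase]
      exact ih.imp (fun a b ⟨d, hd, h3⟩ => ⟨d, List.mem_cons_of_mem _ hd, h3⟩)

lemma chainWalk_support {V : Type} {Γ : SimpleGraph V} (Q : V → Prop)
    (Good : V → V → Prop)
    (hseg : ∀ u v, Good u v → ∀ (σ : Γ.Walk u v), σ.length = Γ.dist u v →
      ∀ p ∈ σ.support, Q p) :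
    ∀ {l : List V} {a b : V} {w : Γ.Walk a b}, ChainWalk Γ l w →
      List.Chain' Good l → (∀ u ∈ l, Q u) → ∀ p ∈ w.support, Q p := by
  intro l a b w hcw
  induction hcw with
  | @single a =>
    intro _ hQ p hp
    rw [SimpleGraph.Walk.support_nil] at hp
    simp only [List.mem_singleton] at hp
    exact hp ▸ hQ a (List.mem_singleton_self a)
  | @step a b c σ rest l hσ h ih =>
    intro hchain hQ p hp
    rw [SimpleGraph.Walk.support_append, List.mem_append] at hp
    rcases hp with hp | hp
    · exact hseg a b (List.isChain_cons_cons.mp hchain).1 σ hσ p hp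
    · exact ih (List.isChain_cons_cons.mp hchain).2
        (fun u hu => hQ u (List.mem_cons_of_mem _ hu)) p (List.mem_of_mem_tail hp)

end GM


open GM in
/-- Lemma "Proj".  Suppose `H` is a horoball of the Groves–Manning
space `X`, `x, y ∈ H(k)`, and `ψ = (α₁, τ₁, α₂, τ₂, …, αₙ, τₙ, α_{n+1})` is a path in
`H^k` between `x` and `y`, where each `αᵢ` is a nontrivial vertical segment and each
`τᵢ` is a nontrivial horizontal segment (equivalently: `ψ` is nonempty, begins and ends
with a vertical edge, and contains a horizontal edge).  If `γ` is a projection of `ψ`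
into `H(k)`, then for every vertex of `γ`, the vertical line at that vertex passes within
1 horizontal unit of a vertex of one of the `τᵢ` (a vertex of a horizontal edge of `ψ`). -/
theorem statement_6 {G : Type} [Group G] {ι : Type} [Fintype ι]
    (S : Finset G) (P : ι → Subgroup G)
    (hSgen : Subgroup.closure (S : Set G) = ⊤)
    (hPgen : ∀ i, Subgroup.closure ((S : Set G) ∩ (P i : Set G)) = P i)
    (hProper : ∀ i, P i ≠ ⊤)
    (δ : ℕ) (hδ : 1 ≤ δ) (hhyp : SlimTriangles (GMGraph (S : Set G) P) δ)
    (i : ι) (g : G) (k : ℕ)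
    (x y : GMVert G ι) (hx : x ∈ horoSphere P i g k) (hy : y ∈ horoSphere P i g k)
    (ψ : (GMGraph (S : Set G) P).Walk x y)
    -- `ψ` lies in `H^k`:
    (hdeep : ∀ v ∈ ψ.support, v ∈ horoDeep P i g k)
    -- `ψ` begins and ends with (nontrivial) vertical segments and has at least one
    -- (nontrivial) horizontal segment:
    (hne : ψ.darts ≠ [])
    (hfirst : ∀ d, ψ.darts.head? = some d → depth d.toProd.1 ≠ depth d.toProd.2)
    (hlast : ∀ d, ψ.darts.getLast? = some d → depth d.toProd.1 ≠ depth d.toProd.2)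
    (hhoriz : ∃ d ∈ ψ.darts, depth d.toProd.1 = depth d.toProd.2)
    -- `γ` is a projection of `ψ` into `H(k)`:
    {x' y' : GMVert G ι} (γ : (levelGraph (S : Set G) P i g k).Walk x' y')
    (hproj : IsProjection (S : Set G) P i g k ψ γ) :
    ∀ p ∈ γ.support, ∃ d ∈ ψ.darts, depth d.toProd.1 = depth d.toProd.2 ∧
      ∃ v ∈ [d.toProd.1, d.toProd.2],
        (atLevel i (baseElt p) (depth v) = v ∨
          (GMGraph (S : Set G) P).Adj (atLevel i (baseElt p) (depth v)) v) := by
  classical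
  have hxcan : atLevel i (baseElt x) k = x := by
    have h := atLevel_canonical hx.1
    rwa [hx.2] at h
  have hdl : dropList i k ψ
      = (baseElt x :: (ψ.darts.filter (fun d => depth d.toProd.1 == depth d.toProd.2)).map
          (fun d => baseElt d.toProd.2)).map (fun c => atLevel i c k) := by
    simp only [dropList, List.map_cons, hxcan, List.map_map, Function.comp_def]
  refine chainWalk_support
    (fun p => ∃ d ∈ ψ.darts, depth d.toProd.1 = depth d.toProd.2 ∧
      ∃ v ∈ [d.toProd.1, d.toProd.2],
        (atLevel i (baseElt p) (depth v) = v ∨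
          (GMGraph (S : Set G) P).Adj (atLevel i (baseElt p) (depth v)) v))
    (fun u v => ∃ d ∈ ψ.darts, depth d.toProd.1 = depth d.toProd.2 ∧
      u = atLevel i (baseElt d.toProd.1) k ∧ v = atLevel i (baseElt d.toProd.2) k)
    ?_ hproj ?_ ?_
  · -- geodesic segments satisfy the conclusion
    rintro u v ⟨d, hd, hdd, rfl, rfl⟩ σ hσ p hp
    have h1 := hdeep _ (ψ.dart_fst_mem_support_of_mem_darts hd)
    have h2 := hdeep _ (ψ.dart_snd_mem_support_of_mem_darts hd)
    obtain ⟨v, hv, hva⟩ := segment_lemma h1 h2 hdd σ hσ p hp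
    exact ⟨d, hd, hdd, v, hv, hva⟩
  · -- the drop list is a `Good`-chain
    rw [hdl]
    refine (List.isChain_map _).mpr ?_
    refine (chain_structure ψ).imp ?_
    rintro a b ⟨d, hd, hdd, h1, h2⟩
    exact ⟨d, hd, hdd, by rw [← h1], by rw [← h2]⟩
  · -- every element of the drop list satisfies the conclusion
    rw [hdl]
    intro u hu
    obtain ⟨c, hc, rfl⟩ := List.mem_map.mp hu
    rcases List.mem_cons.mp hc with rfl | hc
    · -- the initial vertex
      obtain ⟨d0, hd0, hdd0⟩ := hhoriz
      have hmem : d0 ∈ ψ.darts.filter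
          (fun d => depth d.toProd.1 == depth d.toProd.2) :=
        List.mem_filter.mpr ⟨hd0, by simpa using hdd0⟩
      obtain ⟨d₁, L', hL'⟩ := List.exists_cons_of_ne_nil (List.ne_nil_of_mem hmem)
      have hch := chain_structure ψ
      rw [hL', List.map_cons] at hch
      obtain ⟨d, hd, hdd, hb1, -⟩ := (List.isChain_cons_cons.mp hch).1
      refine ⟨d, hd, hdd, d.toProd.1, by simp, Or.inl ?_⟩
      have hb : baseElt (atLevel i (baseElt x) k : GMVert G ι) = baseElt d.toProd.1 := by
        rw [baseElt_atLevel]; exact hb1.symm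
      rw [hb]
      exact atLevel_canonical (hdeep _ (ψ.dart_fst_mem_support_of_mem_darts hd)).1
    · -- a dropped vertex
      obtain ⟨d, hdL, rfl⟩ := List.mem_map.mp hc
      obtain ⟨hd, hddB⟩ := List.mem_filter.mp hdL
      have hdd : depth d.toProd.1 = depth d.toProd.2 := by simpa using hddB
      refine ⟨d, hd, hdd, d.toProd.2, by simp, Or.inl ?_⟩
      rw [baseElt_atLevel]
      exact atLevel_canonical (hdeep _ (ψ.dart_snd_mem_support_of_mem_darts hd)).1
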